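/- The parallelity relation on ultrafilters determines closeness: if E and E' are coarse structures on a set X with the same family of unbounded-set ultrafilters B♯ and the same parallelity relation on B♯, then (X, E) and (X, E') are δ-equivalent (induce the same closeness relation). -/

import Mathlib

open Set

/-- A coarse structure (ballean) on a set `X`. -/
structure CoarseStruct (X : Type*) where
  sets : Set (Set (X × X))
  diagonal_mem : Set.diagonal X ∈ sets
  diagonal_subset : ∀ E ∈ sets, Set.diagonal X ⊆ E
  comp_mem : ∀ E ∈ sets, ∀ F ∈ sets,
    {p : X × X | ∃ z, (p.1, z) ∈ E ∧ (z, p.2) ∈ F} ∈ sets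
  inv_mem : ∀ E ∈ sets, {p : X × X | (p.2, p.1) ∈ E} ∈ sets
  subset_mem : ∀ E ∈ sets, ∀ E' : Set (X × X),
    Set.diagonal X ⊆ E' → E' ⊆ E → E' ∈ sets
  cover : ∀ p : X × X, ∃ E ∈ sets, p ∈ E

namespace CoarseStruct

variable {X : Type*}

/-- The ball `E[A]` of radius `E` around `A`. -/
def ball (E : Set (X × X)) (A : Set X) : Set X := {y | ∃ a ∈ A, (a, y) ∈ E}

/-- A set is bounded if it is contained in a ball around a point. -/
def IsBounded (C : CoarseStruct X) (B : Set X) : Prop :=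
  ∃ E ∈ C.sets, ∃ x : X, B ⊆ ball E {x}

/-- Closeness: `A δ B`. -/
def Close (C : CoarseStruct X) (A B : Set X) : Prop :=
  ∃ E ∈ C.sets, A ⊆ ball E B ∧ B ⊆ ball E A

/-- Linkness: `A λ B`. -/
def Linked (C : CoarseStruct X) (A B : Set X) : Prop :=
  (C.IsBounded A ∧ C.IsBounded B) ∨
  ∃ A' B' : Set X, A' ⊆ A ∧ B' ⊆ B ∧ ¬C.IsBounded A' ∧ ¬C.IsBounded B' ∧ C.Close A' B'

def LambdaEquiv (C C' : CoarseStruct X) : Prop :=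
  ∀ A B : Set X, C.Linked A B ↔ C'.Linked A B

def DeltaEquiv (C C' : CoarseStruct X) : Prop :=
  ∀ A B : Set X, C.Close A B ↔ C'.Close A B

def Discrete (C : CoarseStruct X) : Prop :=
  ∀ E ∈ C.sets, ∃ B : Set X, C.IsBounded B ∧ ∀ x ∉ B, ball E {x} = {x}

def Large (C : CoarseStruct X) (Y : Set X) : Prop :=
  ∃ E ∈ C.sets, ball E Y = Set.univ

/-- The subballean on `Y` is discrete. -/
def DiscreteOn (C : CoarseStruct X) (Y : Set X) : Prop :=
  ∀ E ∈ C.sets, ∃ B : Set X, C.IsBounded B ∧ ∀ y ∈ Y \ B, ball E {y} ∩ Y = {y}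

def CoarselyDiscrete (C : CoarseStruct X) : Prop :=
  ∃ Y : Set X, C.Large Y ∧ C.DiscreteOn Y

def LambdaRigid (C : CoarseStruct X) : Prop :=
  ∀ C' : CoarseStruct X, LambdaEquiv C C' → C' = C

def DeltaRigid (C : CoarseStruct X) : Prop :=
  ∀ C' : CoarseStruct X, DeltaEquiv C C' → C' = C

def IsBase (C : CoarseStruct X) (B : Set (Set (X × X))) : Prop :=
  B ⊆ C.sets ∧ ∀ E ∈ C.sets, ∃ E' ∈ B, E ⊆ E'

/-- Metrizable: the coarse structure has a countable base. -/
def Metrizable (C : CoarseStruct X) : Prop :=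
  ∃ B : Set (Set (X × X)), B.Countable ∧ C.IsBase B

/-- Ordinal: the coarse structure has a base linearly ordered by inclusion. -/
def Ordinal (C : CoarseStruct X) : Prop :=
  ∃ B : Set (Set (X × X)), C.IsBase B ∧ IsChain (· ⊆ ·) B

def MacroUniform (C : CoarseStruct X) (f : X → ℝ) : Prop :=
  ∀ E ∈ C.sets, ∃ r : ℝ, 0 < r ∧
    ∀ x : X, ∀ y ∈ ball E {x}, ∀ z ∈ ball E {x}, |f y - f z| ≤ r

def Submetrizable (C : CoarseStruct X) : Prop :=
  ¬C.IsBounded Set.univ ∧ ∃ C'' : CoarseStruct X,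
    C.sets ⊆ C''.sets ∧ ¬C''.IsBounded Set.univ ∧ C''.Metrizable

def SlowlyOscillating (C : CoarseStruct X) (f : X → ℝ) : Prop :=
  ∀ E ∈ C.sets, ∀ ε : ℝ, 0 < ε → ∃ B : Set X, C.IsBounded B ∧
    ∀ x ∉ B, ∀ y ∈ ball E {x}, ∀ z ∈ ball E {x}, |f y - f z| < ε

/-- The entourage `H_{(E,Φ)}`: `H[x] = {x}` for `x ∈ Φ` and `H[x] = E[x] \ Φ` for `x ∉ Φ`. -/
def EPhiBase (E : Set (X × X)) (Φ : Set X) : Set (X × X) :=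
  {p | (p.1 ∈ Φ ∧ p.1 = p.2) ∨ (p.1 ∉ Φ ∧ p.2 ∉ Φ ∧ (p.1, p.2) ∈ E)}

/-- The family of entourages of the coarse structure `E_φ` with base `{H_{(E,Φ)}}`. -/
def EPhiSets (C : CoarseStruct X) (φ : Filter X) : Set (Set (X × X)) :=
  {E' | Set.diagonal X ⊆ E' ∧ ∃ E ∈ C.sets, ∃ Φ ∈ φ, E' ⊆ EPhiBase E Φ}

/-- The set `B♯` of ultrafilters containing the complement of every bounded set. -/
def Bsharp (C : CoarseStruct X) : Set (Ultrafilter X) :=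
  {p | ∀ B : Set X, C.IsBounded B → Bᶜ ∈ p}

/-- Parallelity of ultrafilters: `p ∥ q`. -/
def Parallel (C : CoarseStruct X) (p q : Ultrafilter X) : Prop :=
  ∃ E ∈ C.sets, ∀ P ∈ p, ball E P ∈ q

def AsympDisjoint (C : CoarseStruct X) (A B : Set X) : Prop :=
  ∀ E ∈ C.sets, C.IsBounded (ball E A ∩ ball E B)

def AsympNbhd (C : CoarseStruct X) (A U : Set X) : Prop :=
  ∀ E ∈ C.sets, C.IsBounded (ball E A \ U)

def Normal (C : CoarseStruct X) : Prop :=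
  ∀ A B : Set X, C.AsympDisjoint A B →
    ∃ U V : Set X, C.AsympNbhd A U ∧ C.AsympNbhd B V ∧ Disjoint U V

end CoarseStruct


section Aux
open CoarseStruct
variable {X : Type*}

namespace CoarseStruct

def comp (E F : Set (X × X)) : Set (X × X) := {p : X × X | ∃ z, (p.1, z) ∈ E ∧ (z, p.2) ∈ F}

def einv (E : Set (X × X)) : Set (X × X) := {p : X × X | (p.2, p.1) ∈ E}

lemma ball_mono_left {E F : Set (X × X)} (h : E ⊆ F) (A : Set X) : ball E A ⊆ ball F A :=
  fun _ ⟨a, ha, hp⟩ => ⟨a, ha, h hp⟩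

lemma ball_mono_right (E : Set (X × X)) {A B : Set X} (h : A ⊆ B) : ball E A ⊆ ball E B :=
  fun _ ⟨a, ha, hp⟩ => ⟨a, h ha, hp⟩

lemma ball_ball {E F : Set (X × X)} {A : Set X} : ball F (ball E A) ⊆ ball (comp E F) A := by
  rintro y ⟨z, ⟨a, ha, hza⟩, hzy⟩
  exact ⟨a, ha, z, hza, hzy⟩

lemma union_subset_comp {E F : Set (X × X)} (hE : Set.diagonal X ⊆ E)
    (hF : Set.diagonal X ⊆ F) : E ∪ F ⊆ comp E F := by
  rintro ⟨a, b⟩ (h | h)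
  · exact ⟨b, h, hF rfl⟩
  · exact ⟨a, hE rfl, h⟩

variable (C : CoarseStruct X)

lemma comp_mem' {E F : Set (X × X)} (hE : E ∈ C.sets) (hF : F ∈ C.sets) :
    comp E F ∈ C.sets := C.comp_mem E hE F hF

lemma einv_mem {E : Set (X × X)} (hE : E ∈ C.sets) : einv E ∈ C.sets := C.inv_mem E hE

lemma directed_sets {E F : Set (X × X)} (hE : E ∈ C.sets) (hF : F ∈ C.sets) :
    ∃ G ∈ C.sets, E ⊆ G ∧ F ⊆ G :=
  ⟨comp E F, C.comp_mem' hE hF,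
    (subset_union_left).trans
      (union_subset_comp (C.diagonal_subset E hE) (C.diagonal_subset F hF)),
    (subset_union_right).trans
      (union_subset_comp (C.diagonal_subset E hE) (C.diagonal_subset F hF))⟩

lemma IsBounded.subset {C : CoarseStruct X} {D B : Set X} (h : C.IsBounded D) (hBD : B ⊆ D) :
    C.IsBounded B := by
  obtain ⟨E, hE, x, hx⟩ := h
  exact ⟨E, hE, x, hBD.trans hx⟩

lemma isBounded_empty [Nonempty X] : C.IsBounded (∅ : Set X) :=
  ⟨Set.diagonal X, C.diagonal_mem, Classical.arbitrary X, by simp [ball]⟩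

lemma IsBounded.union {C : CoarseStruct X} {D₁ D₂ : Set X} (h₁ : C.IsBounded D₁)
    (h₂ : C.IsBounded D₂) : C.IsBounded (D₁ ∪ D₂) := by
  obtain ⟨E, hE, x, hx⟩ := h₁
  obtain ⟨F, hF, y, hy⟩ := h₂
  obtain ⟨H, hH, hxy⟩ := C.cover (x, y)
  have h2 : D₂ ⊆ ball (comp H F) {x} := by
    intro d hd
    obtain ⟨y', hy', hyd⟩ := hy hd
    rcases hy' with rfl
    exact ⟨x, rfl, y', hxy, hyd⟩
  obtain ⟨G, hG, hEG, hHFG⟩ := C.directed_sets hE (C.comp_mem' hH hF)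
  exact ⟨G, hG, x, union_subset (hx.trans (ball_mono_left hEG _))
    (h2.trans (ball_mono_left hHFG _))⟩

lemma IsBounded.ball {C : CoarseStruct X} {D : Set X} {E : Set (X × X)} (h : C.IsBounded D)
    (hE : E ∈ C.sets) : C.IsBounded (ball E D) := by
  obtain ⟨F, hF, x, hx⟩ := h
  exact ⟨comp F E, C.comp_mem' hF hE, x, (ball_mono_right E hx).trans ball_ball⟩

end CoarseStruct

/-- A generic ultrafilter existence lemma from a downward-directed family of nonempty sets. -/
lemma exists_ultrafilter_of_directed {ι : Sort*} [Nonempty ι] (s : ι → Set X)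
    (hd : ∀ i j, ∃ k, s k ⊆ s i ∧ s k ⊆ s j) (hne : ∀ i, (s i).Nonempty) :
    ∃ p : Ultrafilter X, ∀ i, s i ∈ p := by
  haveI : Nonempty X := (hne (Classical.arbitrary ι)).nonempty
  have hdir : Directed (· ≥ ·) fun i => Filter.principal (s i) := by
    intro i j
    obtain ⟨k, hki, hkj⟩ := hd i j
    exact ⟨k, Filter.principal_mono.2 hki, Filter.principal_mono.2 hkj⟩
  haveI hne' : ∀ i, Filter.NeBot (Filter.principal (s i)) := fun i =>
    Filter.principal_neBot_iff.2 (hne i)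
  haveI : Filter.NeBot (⨅ i, Filter.principal (s i)) :=
    Filter.iInf_neBot_of_directed hdir hne'
  refine ⟨Ultrafilter.of (⨅ i, Filter.principal (s i)), fun i => ?_⟩
  exact (Ultrafilter.of_le _) (Filter.mem_iInf_of_mem i (Filter.mem_principal_self _))

namespace CoarseStruct

lemma exists_bsharp_of_not_isBounded {C : CoarseStruct X} {B : Set X} [Nonempty X]
    (h : ¬ C.IsBounded B) : ∃ p : Ultrafilter X, p ∈ C.Bsharp ∧ B ∈ p := by
  haveI : Nonempty {D : Set X // C.IsBounded D} := ⟨⟨∅, C.isBounded_empty⟩⟩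
  obtain ⟨p, hp⟩ := exists_ultrafilter_of_directed
    (fun D : {D : Set X // C.IsBounded D} => B \ D.1)
    (fun D₁ D₂ => ⟨⟨D₁.1 ∪ D₂.1, D₁.2.union D₂.2⟩, by
      constructor <;> (intro x hx; exact ⟨hx.1, fun h' => hx.2 (by simp [h'])⟩)⟩)
    (fun D => by
      rw [Set.diff_nonempty]
      exact fun hsub => h (D.2.subset hsub))
  refine ⟨p, fun D hD => ?_, ?_⟩
  · exact Filter.mem_of_superset (hp ⟨D, hD⟩) (Set.diff_subset_compl B D)
  · exact Filter.mem_of_superset (hp ⟨∅, C.isBounded_empty⟩) (by simp)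

lemma isBounded_of_bsharp_eq {C C' : CoarseStruct X} (h1 : C.Bsharp = C'.Bsharp)
    {D : Set X} (hD : C.IsBounded D) : C'.IsBounded D := by
  by_contra h
  obtain ⟨E, hE, x, hx⟩ := hD
  haveI : Nonempty X := ⟨x⟩
  obtain ⟨p, hp, hDp⟩ := exists_bsharp_of_not_isBounded h
  rw [← h1] at hp
  have h2 := hp D ⟨E, hE, x, hx⟩
  have := Ultrafilter.nonempty_of_mem (p.toFilter.inter_mem hDp h2)
  simp at this

lemma Parallel.symm {C : CoarseStruct X} {p q : Ultrafilter X} (h : C.Parallel p q) :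
    C.Parallel q p := by
  obtain ⟨E, hE, hball⟩ := h
  refine ⟨einv E, C.einv_mem hE, fun Q hQ => ?_⟩
  by_contra hc
  have hPc : (ball (einv E) Q)ᶜ ∈ p := (Ultrafilter.compl_mem_iff_notMem).2 hc
  have h2 : ball E ((ball (einv E) Q)ᶜ) ∈ q := hball _ hPc
  obtain ⟨y, ⟨a, ha, hay⟩, hyQ⟩ :=
    Ultrafilter.nonempty_of_mem (q.toFilter.inter_mem h2 hQ)
  exact ha ⟨y, hyQ, hay⟩

lemma bsharp_of_parallel {C : CoarseStruct X} {p q : Ultrafilter X} (hp : p ∈ C.Bsharp)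
    (h : C.Parallel p q) : q ∈ C.Bsharp := by
  intro D hD
  obtain ⟨E, hE, hball⟩ := h.symm
  by_contra hc
  have hDq : D ∈ q := not_not.1 fun h' => hc (Ultrafilter.compl_mem_iff_notMem.2 h')
  have hbp : ball E D ∈ p := hball D hDq
  have hbnd : C.IsBounded (ball E D) := hD.ball hE
  have hcp : (ball E D)ᶜ ∈ p := hp _ hbnd
  have := Ultrafilter.nonempty_of_mem (p.toFilter.inter_mem hbp hcp)
  simp at this

lemma exists_parallel {C : CoarseStruct X} {A B : Set X} {E : Set (X × X)} [Nonempty X]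
    (hE : E ∈ C.sets) (hAB : A ⊆ ball E B) (p : Ultrafilter X) (hA : A ∈ p) :
    ∃ q : Ultrafilter X, B ∈ q ∧ C.Parallel p q := by
  classical
  have hch : ∀ a : X, a ∈ A → ∃ b ∈ B, (b, a) ∈ E := fun a ha => hAB ha
  set g : X → X := fun a => if h : a ∈ A then (hch a h).choose else Classical.arbitrary X with hg
  refine ⟨p.map g, ?_, einv E, C.einv_mem hE, fun P hP => ?_⟩
  · rw [Ultrafilter.mem_map]
    refine Filter.mem_of_superset hA fun a ha => ?_
    show g a ∈ B
    simp only [hg, dif_pos ha]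
    exact (hch a ha).choose_spec.1
  · rw [Ultrafilter.mem_map]
    refine Filter.mem_of_superset (p.toFilter.inter_mem hP hA) fun a ⟨haP, haA⟩ => ?_
    show g a ∈ ball (einv E) P
    have hb := (hch a haA).choose_spec.2
    refine ⟨a, haP, ?_⟩
    simpa only [hg, dif_pos haA, einv, Set.mem_setOf_eq] using hb

/-- Key half of the theorem: one-sided enclosure transfers. -/
lemma half {C C' : CoarseStruct X} (h1 : C.Bsharp = C'.Bsharp)
    (h2 : ∀ p ∈ C.Bsharp, ∀ q ∈ C.Bsharp, C.Parallel p q ↔ C'.Parallel p q)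
    {A B : Set X} {E : Set (X × X)} (hE : E ∈ C.sets) (hAB : A ⊆ ball E B) :
    ∃ E' ∈ C'.sets, A ⊆ ball E' B := by
  rcases A.eq_empty_or_nonempty with rfl | hAne
  · exact ⟨Set.diagonal X, C'.diagonal_mem, by simp⟩
  obtain ⟨a₀, ha₀⟩ := hAne
  haveI : Nonempty X := ⟨a₀⟩
  obtain ⟨b₀, hb₀, _⟩ := hAB ha₀
  by_contra hcon
  push_neg at hcon
  -- build an ultrafilter containing `A \ ball E' B` for all `E' ∈ C'.sets`
  haveI : Nonempty {E' : Set (X × X) // E' ∈ C'.sets} := ⟨⟨_, C'.diagonal_mem⟩⟩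
  obtain ⟨p, hp⟩ := exists_ultrafilter_of_directed
    (fun E' : {E' : Set (X × X) // E' ∈ C'.sets} => A \ ball E'.1 B)
    (fun E₁ E₂ => by
      obtain ⟨G, hG, h₁, h₂⟩ := C'.directed_sets E₁.2 E₂.2
      exact ⟨⟨G, hG⟩, fun x hx => ⟨hx.1, fun h' => hx.2 (ball_mono_left h₁ _ h')⟩,
        fun x hx => ⟨hx.1, fun h' => hx.2 (ball_mono_left h₂ _ h')⟩⟩)
    (fun E' => by
      rw [Set.diff_nonempty]
      exact fun hsub => (hcon E'.1 E'.2) hsub)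
  have hA : A ∈ p :=
    Filter.mem_of_superset (hp ⟨_, C'.diagonal_mem⟩) diff_subset
  by_cases hpB : p ∈ C.Bsharp
  · -- unbounded case: use parallelity
    obtain ⟨q, hBq, hpar⟩ := C.exists_parallel hE hAB p hA
    have hqB : q ∈ C.Bsharp := bsharp_of_parallel hpB hpar
    obtain ⟨E₀, hE₀, hball⟩ := (h2 p hpB q hqB).1 hpar
    have hPp : A \ ball (einv E₀) B ∈ p := hp ⟨einv E₀, C'.einv_mem hE₀⟩
    have hq2 : ball E₀ (A \ ball (einv E₀) B) ∈ q := hball _ hPp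
    obtain ⟨y, ⟨a, haP, hay⟩, hyB⟩ :=
      Ultrafilter.nonempty_of_mem (q.toFilter.inter_mem hq2 hBq)
    exact haP.2 ⟨y, hyB, hay⟩
  · -- bounded case
    have hpB' : p ∉ C'.Bsharp := h1 ▸ hpB
    simp only [Bsharp, Set.mem_setOf_eq, not_forall] at hpB'
    obtain ⟨D, hDbnd, hDc⟩ := hpB'
    have hDp : D ∈ p := not_not.1 fun h' => hDc (Ultrafilter.compl_mem_iff_notMem.2 h')
    obtain ⟨F, hF, x, hxD⟩ := hDbnd
    obtain ⟨H, hH, hbx⟩ := C'.cover (b₀, x)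
    have hDsub : D ⊆ ball (comp H F) B := by
      intro d hd
      obtain ⟨x', hx', hxd⟩ := hxD hd
      exact ⟨b₀, hb₀, x', by rw [show x' = x from hx']; exact hbx, hxd⟩
    have hmem : A \ ball (comp H F) B ∈ p := hp ⟨comp H F, C'.comp_mem' hH hF⟩
    obtain ⟨d, hd1, hd2⟩ :=
      Ultrafilter.nonempty_of_mem (p.toFilter.inter_mem hmem hDp)
    exact hd1.2 (hDsub hd2)

lemma halfClose {C C' : CoarseStruct X} (h1 : C.Bsharp = C'.Bsharp)
    (h2 : ∀ p ∈ C.Bsharp, ∀ q ∈ C.Bsharp, C.Parallel p q ↔ C'.Parallel p q)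
    {A B : Set X} (h : C.Close A B) : C'.Close A B := by
  obtain ⟨E, hE, hAB, hBA⟩ := h
  obtain ⟨E₁, hE₁, hAB'⟩ := half h1 h2 hE hAB
  obtain ⟨E₂, hE₂, hBA'⟩ := half h1 h2 hE hBA
  obtain ⟨G, hG, h₁, h₂⟩ := C'.directed_sets hE₁ hE₂
  exact ⟨G, hG, hAB'.trans (ball_mono_left h₁ _), hBA'.trans (ball_mono_left h₂ _)⟩

end CoarseStruct
end Aux

/-- If two coarse structures have the same `B♯` and the same parallelity
relation on it, then they are δ-equivalent. -/
theorem parallel_determines_close {X : Type*} (C C' : CoarseStruct X)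
    (h1 : C.Bsharp = C'.Bsharp)
    (h2 : ∀ p ∈ C.Bsharp, ∀ q ∈ C.Bsharp, C.Parallel p q ↔ C'.Parallel p q) :
    CoarseStruct.DeltaEquiv C C' := by
  have h2' : ∀ p ∈ C'.Bsharp, ∀ q ∈ C'.Bsharp, C'.Parallel p q ↔ C.Parallel p q := by
    intro p hp q hq
    rw [← h1] at hp hq
    exact (h2 p hp q hq).symm
  intro A B
  exact ⟨fun h => CoarseStruct.halfClose h1 h2 h,
    fun h => CoarseStruct.halfClose h1.symm h2' h⟩
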